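/- Let (Ω, P) be a probability space, let d, p, r, q ∈ ℕ, let A_1, …, A_p, B_0, …, B_r, D_0, …, D_q be d×d real matrices, and let (u_t)_{t∈ℤ} and (w_t)_{t∈ℤ} be families of square-integrable random vectors Ω → ℝ^d with mean zero such that the combined family {u_t : t ∈ ℤ} ∪ {w_t : t ∈ ℤ} is mutually independent. Define x : ℤ → Ω → ℝ^d by x(t) = 0 for t ≤ 0 and, for t ≥ 1, x(t) = ∑_{i=1}^{p} A_i · x(t−i) + ∑_{j=0}^{r} B_j · u(t−j) + ∑_{k=0}^{q} D_k · w(t−k). Then for every integer τ > max(r, q) and every t ∈ ℤ, the autocovariance matrices satisfy E[x(t) · x(t−τ)ᵀ] = ∑_{i=1}^{p} A_i · E[x(t−i) · x(t−τ)ᵀ]. -/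

import Mathlib

open MeasureTheory Matrix ProbabilityTheory

/-- **Yule–Walker-type recursion for the autocovariances of a multivariate ARMA control
process.** Let `x(t) = ∑_{i=1}^p A_i x(t−i) + ∑_{j=0}^r B_j u(t−j) + ∑_{k=0}^q D_k w(t−k)`
for `t ≥ 1`, with `x(t) = 0` for `t ≤ 0`, where the combined family of the square-integrable
zero-mean processes `u` and `w` is mutually independent. Then for every integer
`τ > max(r, q)` and every `t`, `E[x(t)·x(t−τ)ᵀ] = ∑_{i=1}^p A_i · E[x(t−i)·x(t−τ)ᵀ]`,
entrywise. -/
theorem arma_autocovariance_recursion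
    (d p r q : ℕ) {Ω : Type*} [MeasurableSpace Ω] (P : Measure Ω) [IsProbabilityMeasure P]
    (A B D : ℕ → Matrix (Fin d) (Fin d) ℝ)
    (u w : ℤ → Ω → (Fin d → ℝ))
    (humeas : ∀ t, Measurable (u t)) (hwmeas : ∀ t, Measurable (w t))
    (hu2 : ∀ t (a : Fin d), MemLp (fun ω => u t ω a) 2 P)
    (hw2 : ∀ t (a : Fin d), MemLp (fun ω => w t ω a) 2 P)
    (humean : ∀ t (a : Fin d), ∫ ω, u t ω a ∂P = 0)
    (hwmean : ∀ t (a : Fin d), ∫ ω, w t ω a ∂P = 0)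
    (hindep : iIndepFun (Sum.elim u w) P)
    (x : ℤ → Ω → (Fin d → ℝ))
    (hx0 : ∀ t : ℤ, t ≤ 0 → x t = 0)
    (hxrec : ∀ t : ℤ, 1 ≤ t → ∀ ω,
      x t ω = (∑ i ∈ Finset.Icc 1 p, (A i).mulVec (x (t - (i : ℤ)) ω))
        + (∑ j ∈ Finset.range (r + 1), (B j).mulVec (u (t - (j : ℤ)) ω))
        + (∑ k ∈ Finset.range (q + 1), (D k).mulVec (w (t - (k : ℤ)) ω))) :
    ∀ τ : ℤ, (max r q : ℤ) < τ → ∀ t : ℤ, ∀ a b : Fin d,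
      ∫ ω, x t ω a * x (t - τ) ω b ∂P =
        ∑ i ∈ Finset.Icc 1 p, ∑ c : Fin d,
          A i a c * ∫ ω, x (t - (i : ℤ)) ω c * x (t - τ) ω b ∂P := by
  classical
  set m : (ℤ ⊕ ℤ) → MeasurableSpace Ω :=
    fun i => MeasurableSpace.comap (Sum.elim u w i) inferInstance with hm
  have hmle : ∀ i, m i ≤ ‹MeasurableSpace Ω› := by
    rintro (s | s)
    · exact (humeas s).comap_le
    · exact (hwmeas s).comap_le
  set F : ℤ → MeasurableSpace Ω :=
    fun s => ⨆ i ∈ {i : ℤ ⊕ ℤ | Sum.elim id id i ≤ s}, m i with hF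
  have hFmono : ∀ {s s' : ℤ}, s ≤ s' → F s ≤ F s' := by
    intro s s' hss
    exact biSup_mono fun i hi => le_trans hi hss
  have hmF : ∀ (i : ℤ ⊕ ℤ) (s : ℤ), Sum.elim id id i ≤ s → m i ≤ F s := by
    intro i s hi
    exact le_biSup m hi
  have humF : ∀ (s : ℤ) (c : Fin d), Measurable[m (Sum.inl s)] fun ω => u s ω c := by
    intro s c
    have h1 : Measurable[m (Sum.inl s)] (u s) := measurable_iff_comap_le.mpr le_rfl
    exact (measurable_pi_apply c).comp h1
  have hwmF : ∀ (s : ℤ) (c : Fin d), Measurable[m (Sum.inr s)] fun ω => w s ω c := by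
    intro s c
    have h1 : Measurable[m (Sum.inr s)] (w s) := measurable_iff_comap_le.mpr le_rfl
    exact (measurable_pi_apply c).comp h1
  -- measurability and square-integrability of x, by strong induction
  have hxkey : ∀ (n : ℕ) (s : ℤ), s ≤ (n : ℤ) → ∀ c : Fin d,
      Measurable[F s] (fun ω => x s ω c) ∧ MemLp (fun ω => x s ω c) 2 P := by
    intro n
    induction n with
    | zero =>
      intro s hs c
      have hxs : x s = 0 := hx0 s (by exact_mod_cast hs)
      constructor
      · simp only [hxs, Pi.zero_apply]; exact measurable_const
      · simpa [hxs] using (memLp_const (μ := P) (p := 2) (0 : ℝ))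
    | succ n ih =>
      intro s hs c
      by_cases hsn : s ≤ (n : ℤ)
      · exact ih s hsn c
      · have hs1 : (1 : ℤ) ≤ s := by omega
        have hxe : (fun ω => x s ω c) = fun ω =>
            (∑ i ∈ Finset.Icc 1 p, ∑ e, A i c e * x (s - (i : ℤ)) ω e)
            + (∑ j ∈ Finset.range (r + 1), ∑ e, B j c e * u (s - (j : ℤ)) ω e)
            + (∑ k ∈ Finset.range (q + 1), ∑ e, D k c e * w (s - (k : ℤ)) ω e) := by
          funext ω
          rw [hxrec s hs1 ω]
          simp [mulVec, dotProduct]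
        constructor
        · rw [hxe]
          refine Measurable.add (Measurable.add ?_ ?_) ?_
          · refine Finset.measurable_sum _ fun i hi => Finset.measurable_sum _ fun e _ =>
              Measurable.const_mul ?_ _
            have hi1 : 1 ≤ i := (Finset.mem_Icc.mp hi).1
            have hle : s - (i : ℤ) ≤ (n : ℤ) := by omega
            exact ((ih (s - (i : ℤ)) hle e).1).mono (hFmono (by omega)) le_rfl
          · refine Finset.measurable_sum _ fun j hj => Finset.measurable_sum _ fun e _ =>
              Measurable.const_mul ?_ _
            exact (humF (s - (j : ℤ)) e).mono (hmF (Sum.inl (s - (j : ℤ))) s (by simp))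
              le_rfl
          · refine Finset.measurable_sum _ fun k hk => Finset.measurable_sum _ fun e _ =>
              Measurable.const_mul ?_ _
            exact (hwmF (s - (k : ℤ)) e).mono (hmF (Sum.inr (s - (k : ℤ))) s (by simp))
              le_rfl
        · rw [hxe]
          refine MemLp.add (MemLp.add ?_ ?_) ?_
          · refine memLp_finset_sum _ fun i hi => memLp_finset_sum _ fun e _ => ?_
            have hi1 : 1 ≤ i := (Finset.mem_Icc.mp hi).1
            exact ((ih (s - (i : ℤ)) (by omega) e).2).const_mul _
          · exact memLp_finset_sum _ fun j _ => memLp_finset_sum _ fun e _ =>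
              (hu2 (s - (j : ℤ)) e).const_mul _
          · exact memLp_finset_sum _ fun k _ => memLp_finset_sum _ fun e _ =>
              (hw2 (s - (k : ℤ)) e).const_mul _
  have hxF : ∀ (s : ℤ) (c : Fin d), Measurable[F s] fun ω => x s ω c :=
    fun s c => (hxkey s.toNat s (Int.self_le_toNat s) c).1
  have hx2 : ∀ (s : ℤ) (c : Fin d), MemLp (fun ω => x s ω c) 2 P :=
    fun s c => (hxkey s.toNat s (Int.self_le_toNat s) c).2
  -- product of two L² functions is integrable
  have hmul : ∀ {f g : Ω → ℝ}, MemLp f 2 P → MemLp g 2 P →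
      Integrable (fun ω => f ω * g ω) P := by
    intro f g hf hg
    have : MemLp (f • g) 1 P := hg.smul hf (hpqr := ⟨by simp [ENNReal.inv_two_add_inv_two]⟩)
    exact memLp_one_iff_integrable.mp this
  -- independence of m i and F s for indices beyond s
  have hIndepσ : ∀ (s : ℤ) (i : ℤ ⊕ ℤ), s < Sum.elim id id i → Indep (m i) (F s) P := by
    intro s i his
    have h := indep_biSup_compl hmle ((iIndepFun_iff_iIndep _ _ _).mp hindep)
      {j : ℤ ⊕ ℤ | Sum.elim id id j ≤ s}ᶜ
    rw [compl_compl] at h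
    refine indep_of_indep_of_le_left h ?_
    exact le_biSup m (by simpa using not_le.mpr his)
  have hzero_u : ∀ (s mi : ℤ), s < mi → ∀ (c e : Fin d),
      ∫ ω, u mi ω c * x s ω e ∂P = 0 := by
    intro s mi hsm c e
    have hind : IndepFun (fun ω => u mi ω c) (fun ω => x s ω e) P := by
      rw [IndepFun_iff_Indep]
      refine indep_of_indep_of_le_right
        (indep_of_indep_of_le_left (hIndepσ s (Sum.inl mi) (by simpa)) ?_) ?_
      · exact measurable_iff_comap_le.mp (humF mi c)
      · exact measurable_iff_comap_le.mp (hxF s e)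
    have h2 : ∫ ω, u mi ω c * x s ω e ∂P = (∫ ω, u mi ω c ∂P) * ∫ ω, x s ω e ∂P :=
      hind.integral_mul_eq_mul_integral (hu2 mi c).1 (hx2 s e).1
    rw [h2, humean mi c, zero_mul]
  have hzero_w : ∀ (s mi : ℤ), s < mi → ∀ (c e : Fin d),
      ∫ ω, w mi ω c * x s ω e ∂P = 0 := by
    intro s mi hsm c e
    have hind : IndepFun (fun ω => w mi ω c) (fun ω => x s ω e) P := by
      rw [IndepFun_iff_Indep]
      refine indep_of_indep_of_le_right
        (indep_of_indep_of_le_left (hIndepσ s (Sum.inr mi) (by simpa)) ?_) ?_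
      · exact measurable_iff_comap_le.mp (hwmF mi c)
      · exact measurable_iff_comap_le.mp (hxF s e)
    have h2 : ∫ ω, w mi ω c * x s ω e ∂P = (∫ ω, w mi ω c ∂P) * ∫ ω, x s ω e ∂P :=
      hind.integral_mul_eq_mul_integral (hw2 mi c).1 (hx2 s e).1
    rw [h2, hwmean mi c, zero_mul]
  -- main computation
  intro τ hτ t a b
  by_cases ht : t ≤ 0
  · have hxt : x t = 0 := hx0 t ht
    rw [hxt]
    simp only [Pi.zero_apply, zero_mul, integral_zero]
    symm
    refine Finset.sum_eq_zero fun i hi => Finset.sum_eq_zero fun c _ => ?_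
    have hi1 : 1 ≤ i := (Finset.mem_Icc.mp hi).1
    have : x (t - (i : ℤ)) = 0 := hx0 _ (by omega)
    rw [this]
    simp
  · have ht1 : (1 : ℤ) ≤ t := by omega
    have hτ' : max (r : ℤ) (q : ℤ) < τ := by exact_mod_cast hτ
    have hτr : (r : ℤ) < τ := lt_of_le_of_lt (le_max_left _ _) hτ'
    have hτq : (q : ℤ) < τ := lt_of_le_of_lt (le_max_right _ _) hτ'
    have hexp : ∀ ω, x t ω a * x (t - τ) ω b =
        (∑ i ∈ Finset.Icc 1 p, ∑ c, A i a c * (x (t - (i : ℤ)) ω c * x (t - τ) ω b))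
        + (∑ j ∈ Finset.range (r + 1), ∑ c, B j a c * (u (t - (j : ℤ)) ω c * x (t - τ) ω b))
        + (∑ k ∈ Finset.range (q + 1), ∑ c, D k a c * (w (t - (k : ℤ)) ω c * x (t - τ) ω b)) := by
      intro ω
      rw [hxrec t ht1 ω]
      simp only [Pi.add_apply, Finset.sum_apply, mulVec, dotProduct]
      simp only [add_mul, Finset.sum_mul, mul_assoc]
    have hint1 : Integrable (fun ω =>
        ∑ i ∈ Finset.Icc 1 p, ∑ c, A i a c * (x (t - (i : ℤ)) ω c * x (t - τ) ω b)) P :=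
      integrable_finset_sum _ fun i _ => integrable_finset_sum _ fun c _ =>
        (hmul (hx2 _ c) (hx2 _ b)).const_mul _
    have hint2 : Integrable (fun ω =>
        ∑ j ∈ Finset.range (r + 1), ∑ c, B j a c * (u (t - (j : ℤ)) ω c * x (t - τ) ω b)) P :=
      integrable_finset_sum _ fun j _ => integrable_finset_sum _ fun c _ =>
        (hmul (hu2 _ c) (hx2 _ b)).const_mul _
    have hint3 : Integrable (fun ω =>
        ∑ k ∈ Finset.range (q + 1), ∑ c, D k a c * (w (t - (k : ℤ)) ω c * x (t - τ) ω b)) P :=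
      integrable_finset_sum _ fun k _ => integrable_finset_sum _ fun c _ =>
        (hmul (hw2 _ c) (hx2 _ b)).const_mul _
    have hstep : ∫ ω, x t ω a * x (t - τ) ω b ∂P =
        (∫ ω, ∑ i ∈ Finset.Icc 1 p, ∑ c,
            A i a c * (x (t - (i : ℤ)) ω c * x (t - τ) ω b) ∂P)
        + (∫ ω, ∑ j ∈ Finset.range (r + 1), ∑ c,
            B j a c * (u (t - (j : ℤ)) ω c * x (t - τ) ω b) ∂P)
        + (∫ ω, ∑ k ∈ Finset.range (q + 1), ∑ c,
            D k a c * (w (t - (k : ℤ)) ω c * x (t - τ) ω b) ∂P) := by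
      have hint12 : Integrable (fun ω =>
          (∑ i ∈ Finset.Icc 1 p, ∑ c, A i a c * (x (t - (i : ℤ)) ω c * x (t - τ) ω b))
          + (∑ j ∈ Finset.range (r + 1), ∑ c,
              B j a c * (u (t - (j : ℤ)) ω c * x (t - τ) ω b))) P := hint1.add hint2
      rw [integral_congr_ae (Filter.Eventually.of_forall hexp)]
      rw [integral_add hint12 hint3, integral_add hint1 hint2]
    have e1 : (∫ ω, ∑ i ∈ Finset.Icc 1 p, ∑ c,
          A i a c * (x (t - (i : ℤ)) ω c * x (t - τ) ω b) ∂P) =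
        ∑ i ∈ Finset.Icc 1 p, ∑ c,
          A i a c * ∫ ω, x (t - (i : ℤ)) ω c * x (t - τ) ω b ∂P := by
      rw [integral_finset_sum _ fun i _ => integrable_finset_sum _ fun c _ =>
        (hmul (hx2 _ c) (hx2 _ b)).const_mul _]
      refine Finset.sum_congr rfl fun i _ => ?_
      rw [integral_finset_sum _ fun c _ => (hmul (hx2 _ c) (hx2 _ b)).const_mul _]
      exact Finset.sum_congr rfl fun c _ => integral_const_mul _ _
    have e2 : (∫ ω, ∑ j ∈ Finset.range (r + 1), ∑ c,
          B j a c * (u (t - (j : ℤ)) ω c * x (t - τ) ω b) ∂P) = 0 := by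
      rw [integral_finset_sum _ fun j _ => integrable_finset_sum _ fun c _ =>
        (hmul (hu2 _ c) (hx2 _ b)).const_mul _]
      refine Finset.sum_eq_zero fun j hj => ?_
      rw [integral_finset_sum _ fun c _ => (hmul (hu2 _ c) (hx2 _ b)).const_mul _]
      refine Finset.sum_eq_zero fun c _ => ?_
      have hj' : (j : ℤ) ≤ (r : ℤ) := by
        exact_mod_cast Nat.lt_succ_iff.mp (Finset.mem_range.mp hj)
      rw [integral_const_mul, hzero_u (t - τ) (t - (j : ℤ)) (by omega) c b, mul_zero]
    have e3 : (∫ ω, ∑ k ∈ Finset.range (q + 1), ∑ c,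
          D k a c * (w (t - (k : ℤ)) ω c * x (t - τ) ω b) ∂P) = 0 := by
      rw [integral_finset_sum _ fun k _ => integrable_finset_sum _ fun c _ =>
        (hmul (hw2 _ c) (hx2 _ b)).const_mul _]
      refine Finset.sum_eq_zero fun k hk => ?_
      rw [integral_finset_sum _ fun c _ => (hmul (hw2 _ c) (hx2 _ b)).const_mul _]
      refine Finset.sum_eq_zero fun c _ => ?_
      have hk' : (k : ℤ) ≤ (q : ℤ) := by
        exact_mod_cast Nat.lt_succ_iff.mp (Finset.mem_range.mp hk)
      rw [integral_const_mul, hzero_w (t - τ) (t - (k : ℤ)) (by omega) c b, mul_zero]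
    rw [hstep, e1, e2, e3, add_zero, add_zero]
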